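/- The extreme points of the set Γ = {(x₁,…,xₙ) ∈ ℝⁿ : x₁ ≥ x₂ ≥ ⋯ ≥ x_k = x_{k+1} = ⋯ = xₙ ≥ 0 and (x₁+⋯+x_k)/k ≤ 1} are exactly the k+1 points (k,0,…,0), (k/2, k/2, 0,…,0), …, (k/(k−1),…,k/(k−1),0,…,0), (1,1,…,1), and (0,0,…,0). -/

import Mathlib

open Finset

private lemma filter_sum_aux (n k : ℕ) (hkn : k ≤ n) (f : ℕ → ℝ) :
    ∑ i ∈ Finset.univ.filter (fun i : Fin n => (i : ℕ) < k), f i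
      = ∑ i ∈ Finset.range k, f i := by
  rw [Finset.sum_filter, Fin.sum_univ_eq_sum_range (fun m => if m < k then f m else 0),
    ← Finset.sum_filter]
  congr 1
  ext i
  simp only [Finset.mem_filter, Finset.mem_range]
  omega

private def Xext (n : ℕ) (hn : 0 < n) (x : Fin n → ℝ) (i : ℕ) : ℝ :=
  x ⟨min i (n-1), by omega⟩

private lemma Xext_lt {n : ℕ} (hn : 0 < n) (x : Fin n → ℝ) {i : ℕ} (h : i < n) :
    Xext n hn x i = x ⟨i, h⟩ := by
  have : min i (n-1) = i := by omega
  simp [Xext, this]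

private lemma Xext_anti {n : ℕ} (hn : 0 < n) {x : Fin n → ℝ} (hx : Antitone x) :
    Antitone (Xext n hn x) := by
  intro a b hab
  exact hx (by simp [Fin.le_def]; omega)

private def Gam (n k : ℕ) (ik in1 : Fin n) : Set (Fin n → ℝ) :=
  {x : Fin n → ℝ | Antitone x ∧
    (∀ i : Fin n, k - 1 ≤ (i : ℕ) → x i = x ik) ∧
    0 ≤ x in1 ∧
    (∑ i ∈ Finset.univ.filter (fun i : Fin n => (i : ℕ) < k), x i) / k ≤ 1}

private noncomputable def EE (n k j : ℕ) : Fin n → ℝ :=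
  fun i => if (i : ℕ) < j then (k : ℝ) / j else 0

private lemma Gam_nonneg {n k : ℕ} {ik in1 : Fin n} (hin1 : (in1 : ℕ) = n - 1)
    {x : Fin n → ℝ} (hx : x ∈ Gam n k ik in1) (i : Fin n) : 0 ≤ x i := by
  obtain ⟨ha, hc, h0, hs⟩ := hx
  refine h0.trans (ha ?_)
  simp only [Fin.le_def, hin1]
  omega

private lemma Gam_sum {n k : ℕ} {ik in1 : Fin n} (hk1 : 1 ≤ k) (hkn : k ≤ n)
    {x : Fin n → ℝ} (hx : x ∈ Gam n k ik in1) :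
    ∑ i ∈ Finset.range k, Xext n (by omega) x i ≤ k := by
  obtain ⟨ha, hc, h0, hs⟩ := hx
  have hkR : (0:ℝ) < k := by exact_mod_cast hk1
  rw [div_le_one hkR] at hs
  have h1 : ∑ i ∈ Finset.univ.filter (fun i : Fin n => (i : ℕ) < k), x i
      = ∑ i ∈ Finset.univ.filter (fun i : Fin n => (i : ℕ) < k),
          Xext n (by omega : 0 < n) x (i : ℕ) := by
    refine Finset.sum_congr rfl fun i _ => ?_
    rw [Xext_lt]
  calc ∑ i ∈ Finset.range k, Xext n (by omega) x i
      = ∑ i ∈ Finset.univ.filter (fun i : Fin n => (i : ℕ) < k), x i := by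
        rw [h1]
        exact (filter_sum_aux n k hkn _).symm
    _ ≤ k := hs

private lemma Gam_coord {n k : ℕ} {ik in1 : Fin n} (hk1 : 1 ≤ k) (hkn : k ≤ n)
    (hin1 : (in1 : ℕ) = n - 1) {j : ℕ} (hj1 : 1 ≤ j) (hjk : j ≤ k)
    {x : Fin n → ℝ} (hx : x ∈ Gam n k ik in1) :
    (j : ℝ) * Xext n (by omega) x (j-1) ≤ k := by
  have hn : 0 < n := by omega
  have hnn : ∀ i ∈ Finset.range k, 0 ≤ Xext n hn x i := by
    intro i _
    exact Gam_nonneg hin1 hx _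
  have h2 : ∑ i ∈ Finset.range j, Xext n hn x i ≤ ∑ i ∈ Finset.range k, Xext n hn x i :=
    Finset.sum_le_sum_of_subset_of_nonneg (Finset.range_subset_range.mpr hjk)
      (fun i hi _ => hnn i hi)
  have h3 : (j : ℝ) * Xext n hn x (j-1) ≤ ∑ i ∈ Finset.range j, Xext n hn x i := by
    have := Finset.card_nsmul_le_sum (Finset.range j) (Xext n hn x) (Xext n hn x (j-1))
      (fun i hi => Xext_anti hn hx.1 (by simp at hi; omega))
    simpa [nsmul_eq_mul] using this
  calc (j : ℝ) * Xext n hn x (j-1) ≤ _ := h3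
    _ ≤ _ := h2
    _ ≤ k := Gam_sum hk1 hkn hx

private lemma Gam_convex {n k : ℕ} {ik in1 : Fin n} (hk1 : 1 ≤ k) :
    Convex ℝ (Gam n k ik in1) := by
  have hkR : (0:ℝ) < k := by exact_mod_cast hk1
  intro x hx y hy a b ha hb hab
  obtain ⟨hax, hcx, h0x, hsx⟩ := hx
  obtain ⟨hay, hcy, h0y, hsy⟩ := hy
  refine ⟨?_, ?_, ?_, ?_⟩
  · intro i j hij
    simp only [Pi.add_apply, Pi.smul_apply, smul_eq_mul]
    exact add_le_add (mul_le_mul_of_nonneg_left (hax hij) ha)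
      (mul_le_mul_of_nonneg_left (hay hij) hb)
  · intro i hi
    simp only [Pi.add_apply, Pi.smul_apply, smul_eq_mul, hcx i hi, hcy i hi]
  · simp only [Pi.add_apply, Pi.smul_apply, smul_eq_mul]
    exact add_nonneg (mul_nonneg ha h0x) (mul_nonneg hb h0y)
  · rw [div_le_one hkR]
    rw [div_le_one hkR] at hsx hsy
    simp only [Pi.add_apply, Pi.smul_apply, smul_eq_mul]
    rw [Finset.sum_add_distrib, ← Finset.mul_sum, ← Finset.mul_sum]
    nlinarith
private lemma EE_mem {n k : ℕ} {ik in1 : Fin n} (hk1 : 1 ≤ k) (hkn : k ≤ n)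
    (hik : (ik : ℕ) = k - 1) (hin1 : (in1 : ℕ) = n - 1)
    {j : ℕ} (hj1 : 1 ≤ j) (hjk : j ≤ k - 1) :
    EE n k j ∈ Gam n k ik in1 := by
  have hkR : (0:ℝ) < k := by exact_mod_cast hk1
  have hjR : (0:ℝ) < j := by exact_mod_cast hj1
  refine ⟨?_, ?_, ?_, ?_⟩
  · intro i1 i2 h12
    simp only [EE]
    rw [Fin.le_def] at h12
    split_ifs with h1 h2 h2
    · exact le_rfl
    · omega
    · positivity
    · exact le_rfl
  · intro i hi
    simp only [EE, hik]
    rw [if_neg (by omega), if_neg (by omega)]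
  · simp only [EE, hin1]
    rw [if_neg (by omega)]
  · have h1 : ∑ i ∈ Finset.univ.filter (fun i : Fin n => (i : ℕ) < k), EE n k j i
        = ∑ i ∈ Finset.range k, (if i < j then (k:ℝ)/j else 0) := by
      rw [← filter_sum_aux n k hkn (fun m => if m < j then (k:ℝ)/j else 0)]
      rfl
    have h2 : ∑ i ∈ Finset.range k, (if i < j then (k:ℝ)/j else 0) = (k:ℝ) := by
      rw [← Finset.sum_filter]
      have : Finset.filter (fun i => i < j) (Finset.range k) = Finset.range j := by
        ext i; simp only [Finset.mem_filter, Finset.mem_range]; omega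
      rw [this, Finset.sum_const, Finset.card_range, nsmul_eq_mul]
      field_simp
    rw [h1, h2, div_self (ne_of_gt hkR)]

private lemma ones_mem {n k : ℕ} {ik in1 : Fin n} (hk1 : 1 ≤ k) (hkn : k ≤ n) :
    (fun _ => 1 : Fin n → ℝ) ∈ Gam n k ik in1 := by
  have hkR : (0:ℝ) < k := by exact_mod_cast hk1
  refine ⟨fun _ _ _ => le_rfl, fun _ _ => rfl, zero_le_one, ?_⟩
  rw [filter_sum_aux n k hkn (fun _ => (1:ℝ)), Finset.sum_const, Finset.card_range,
    nsmul_eq_mul, mul_one, div_self (ne_of_gt hkR)]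

private lemma zero_mem {n k : ℕ} {ik in1 : Fin n} (hk1 : 1 ≤ k) :
    (0 : Fin n → ℝ) ∈ Gam n k ik in1 := by
  have hkR : (0:ℝ) < k := by exact_mod_cast hk1
  refine ⟨fun _ _ _ => le_rfl, fun _ _ => rfl, le_rfl, ?_⟩
  simp

private lemma tele_aux (X : ℕ → ℝ) (a : ℕ) : ∀ b, a + 1 ≤ b →
    ∑ j ∈ Finset.Ico (a+1) b, (X (j-1) - X j) = X a - X (b-1) := by
  intro b hb
  induction b, hb using Nat.le_induction with
  | base => simp
  | succ b hb ih =>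
      rw [Finset.sum_Ico_succ_top (by omega), ih]
      have h1 : b + 1 - 1 = b := by omega
      rw [h1]
      ring

private lemma abel_aux (X : ℕ → ℝ) : ∀ k : ℕ, 1 ≤ k →
    (∑ j ∈ Finset.Ico 1 k, (j:ℝ) * (X (j-1) - X j)) + k * X (k-1)
      = ∑ i ∈ Finset.range k, X i := by
  intro k hk
  induction k, hk using Nat.le_induction with
  | base => simp
  | succ k hk ih =>
      rw [Finset.sum_Ico_succ_top (by omega), Finset.sum_range_succ, ← ih]
      have h1 : k + 1 - 1 = k := by omega
      rw [h1]
      push_cast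
      ring


private lemma exposed_extreme_aux {m : ℕ} {s : Set (Fin m → ℝ)} (f : (Fin m → ℝ) → ℝ)
    (hf : ∀ (a b : ℝ) (y z : Fin m → ℝ), f (a • y + b • z) = a * f y + b * f z)
    {x : Fin m → ℝ} (hx : x ∈ s) (hb : ∀ y ∈ s, f y ≤ f x)
    (hu : ∀ y ∈ s, f y = f x → y = x) : x ∈ Set.extremePoints ℝ s := by
  refine ⟨hx, fun y hy z hz hseg => ?_⟩
  obtain ⟨a, b, ha, hb', hab, hxy⟩ := hseg
  have h1 : f x = a * f y + b * f z := by rw [← hxy, hf]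
  have e1 : 0 ≤ a * (f x - f y) := mul_nonneg ha.le (by linarith [hb y hy])
  have e2 : 0 ≤ b * (f x - f z) := mul_nonneg hb'.le (by linarith [hb z hz])
  have e3 : a * (f x - f y) + b * (f x - f z) = 0 := by
    linear_combination f x * hab + h1
  have hy' : a * (f x - f y) = 0 := by linarith
  have hz' : b * (f x - f z) = 0 := by linarith
  have : f y = f x := by
    rcases mul_eq_zero.mp hy' with h | h
    · exact absurd h (ne_of_gt ha)
    · linarith
  have hz2 : f z = f x := by
    rcases mul_eq_zero.mp hz' with h | h
    · exact absurd h (ne_of_gt hb')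
    · linarith
  exact hu y hy this
private lemma Gam_subset_hull {n k : ℕ} {ik in1 : Fin n} (hk1 : 1 ≤ k) (hkn : k ≤ n)
    (hik : (ik : ℕ) = k - 1) (hin1 : (in1 : ℕ) = n - 1) :
    Gam n k ik in1 ⊆ convexHull ℝ
      ((⋃ j ∈ Set.Icc 1 (k-1), {EE n k j}) ∪ {fun _ => (1:ℝ)} ∪ {0}) := by
  intro x hx
  have hn : 0 < n := by omega
  have hkR : (0:ℝ) < k := by exact_mod_cast hk1
  set X := Xext n hn x with hX
  set s := ∑ i ∈ Finset.range k, X i with hs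
  set w : ℕ → ℝ := (fun j => if j = 0 then 1 - s/k else if j = k then X (k-1)
    else (j:ℝ) * (X (j-1) - X j) / k) with hw
  set P : ℕ → Fin n → ℝ := (fun j => if j = 0 then 0 else if j = k then (fun _ => 1)
    else EE n k j) with hP
  have hins : Finset.range (k+1) = insert 0 (Finset.Ico 1 (k+1)) := by
    ext i; simp; omega
  have h0notin : (0:ℕ) ∉ Finset.Ico 1 (k+1) := by simp
  have hw0 : w 0 = 1 - s/k := by simp [hw]
  have hwk : w k = X (k-1) := by simp [hw]; intro h; exact absurd h (by omega)
  have hwmid : ∀ j, 1 ≤ j → j < k → w j = (j:ℝ) * (X (j-1) - X j) / k := by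
    intro j h1 h2
    rw [hw]
    simp only [if_neg (by omega : j ≠ 0), if_neg (by omega : j ≠ k)]
  -- weights nonneg
  have hwnn : ∀ j ∈ Finset.range (k+1), 0 ≤ w j := by
    intro j hj
    simp only [Finset.mem_range] at hj
    rcases Nat.eq_zero_or_pos j with h0 | h0
    · subst h0
      rw [hw0, sub_nonneg, div_le_one hkR]
      exact Gam_sum hk1 hkn hx
    · rcases eq_or_ne j k with hk' | hk'
      · subst hk'
        rw [hwk, hX]
        exact Gam_nonneg hin1 hx _
      · rw [hwmid j h0 (by omega)]
        have hmono : X j ≤ X (j-1) := Xext_anti hn hx.1 (by omega)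
        have : (0:ℝ) ≤ (j:ℝ) := by positivity
        apply div_nonneg (mul_nonneg this (by linarith)) hkR.le
  -- sum of weights is 1
  have habel := abel_aux X k hk1
  have hwsum : ∑ j ∈ Finset.range (k+1), w j = 1 := by
    rw [hins, Finset.sum_insert h0notin, Finset.sum_Ico_succ_top (by omega : 1 ≤ k)]
    have hmid : ∑ j ∈ Finset.Ico 1 k, w j
        = (∑ j ∈ Finset.Ico 1 k, (j:ℝ) * (X (j-1) - X j)) / k := by
      rw [Finset.sum_div]
      refine Finset.sum_congr rfl fun j hj => ?_
      simp only [Finset.mem_Ico] at hj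
      exact hwmid j hj.1 hj.2
    rw [hw0, hwk, hmid]
    have h2 : ∑ j ∈ Finset.Ico 1 k, (j:ℝ) * (X (j-1) - X j) = s - k * X (k-1) := by
      linarith [habel]
    rw [h2]
    field_simp
    ring
  -- the combination equals x
  have hcomb : ∑ j ∈ Finset.range (k+1), w j • P j = x := by
    funext i
    rw [Finset.sum_apply]
    rw [hins, Finset.sum_insert h0notin, Finset.sum_Ico_succ_top (by omega : 1 ≤ k)]
    have hterm0 : (w 0 • P 0) i = 0 := by
      rw [hP]; simp
    have htermk : (w k • P k) i = X (k-1) := by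
      have hPk : P k = fun _ => (1:ℝ) := by simp [hP]; intro h; exact absurd h (by omega)
      rw [Pi.smul_apply, hwk, hPk]
      simp
    have hmid : ∑ j ∈ Finset.Ico 1 k, (w j • P j) i
        = ∑ j ∈ Finset.Ico 1 k, (if (i:ℕ) < j then X (j-1) - X j else 0) := by
      refine Finset.sum_congr rfl fun j hj => ?_
      simp only [Finset.mem_Ico] at hj
      have hj0 : (j:ℝ) ≠ 0 := by
        have : 0 < j := hj.1
        positivity
      rw [hP]
      simp only [if_neg (by omega : j ≠ 0), if_neg (by omega : j ≠ k), Pi.smul_apply,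
        smul_eq_mul, EE, hwmid j hj.1 hj.2, mul_ite, mul_zero]
      congr 1
      field_simp
    have hred : ∑ j ∈ Finset.Ico 1 k, (if (i:ℕ) < j then X (j-1) - X j else 0)
        = ∑ j ∈ Finset.Ico ((i:ℕ)+1) k, (X (j-1) - X j) := by
      have hsub : Finset.Ico ((i:ℕ)+1) k ⊆ Finset.Ico 1 k := by
        intro m hm
        simp only [Finset.mem_Ico] at hm ⊢
        omega
      rw [← Finset.sum_subset hsub (fun j hj hj' => ?_)]
      · refine Finset.sum_congr rfl fun j hj => ?_
        simp only [Finset.mem_Ico] at hj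
        rw [if_pos (by omega)]
      · simp only [Finset.mem_Ico] at hj hj'
        rw [if_neg (by omega)]
    rw [hterm0, htermk, hmid, hred]
    by_cases hik2 : (i:ℕ) + 1 ≤ k
    · rw [tele_aux X (i:ℕ) k hik2]
      have : X (i:ℕ) = x i := by
        rw [hX, Xext_lt hn x i.isLt]
      rw [this]
      ring
    · rw [Finset.Ico_eq_empty (by omega), Finset.sum_empty]
      have h1 : X (k-1) = x ik := by
        rw [hX, Xext]
        have hmin : min (k-1) (n-1) = (ik : ℕ) := by omega
        congr 1
        exact Fin.ext hmin
      have h2 : x i = x ik := hx.2.1 i (by omega)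
      rw [h1, h2]
      ring
  rw [← hcomb]
  apply (convex_convexHull ℝ _).sum_mem hwnn hwsum
  intro j hj
  simp only [Finset.mem_range] at hj
  apply subset_convexHull
  rcases Nat.eq_zero_or_pos j with h0 | h0
  · subst h0
    rw [hP]
    simp only [if_pos rfl]
    exact Set.mem_union_right _ rfl
  · rcases eq_or_ne j k with hk' | hk'
    · rw [hP]
      simp only [if_neg (by omega : ¬ j = 0), if_pos hk']
      exact Set.mem_union_left _ (Set.mem_union_right _ rfl)
    · rw [hP]
      simp only [if_neg (by omega : ¬ j = 0), if_neg hk']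
      refine Set.mem_union_left _ (Set.mem_union_left _ ?_)
      exact Set.mem_biUnion (Set.mem_Icc.mpr ⟨h0, by omega⟩) rfl
private lemma zero_extreme {n k : ℕ} {ik in1 : Fin n} (hk1 : 1 ≤ k) (hkn : k ≤ n)
    (hin1 : (in1 : ℕ) = n - 1) :
    (0 : Fin n → ℝ) ∈ Set.extremePoints ℝ (Gam n k ik in1) := by
  have hn : 0 < n := by omega
  apply exposed_extreme_aux (fun y => -(y ⟨0, hn⟩))
  · intro a b y z; simp; ring
  · exact zero_mem hk1
  · intro y hy
    simp only [Pi.zero_apply, neg_zero, neg_nonpos]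
    exact Gam_nonneg hin1 hy _
  · intro y hy h
    have h0 : y ⟨0, hn⟩ = 0 := by
      simpa using h
    funext i
    have hle : y i ≤ y ⟨0, hn⟩ := hy.1 (by simp [Fin.le_def])
    have hge : 0 ≤ y i := Gam_nonneg hin1 hy i
    simp only [Pi.zero_apply]
    linarith

private lemma ones_extreme {n k : ℕ} {ik in1 : Fin n} (hk1 : 1 ≤ k) (hkn : k ≤ n)
    (hik : (ik : ℕ) = k - 1) (hin1 : (in1 : ℕ) = n - 1) :
    (fun _ => (1:ℝ) : Fin n → ℝ) ∈ Set.extremePoints ℝ (Gam n k ik in1) := by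
  have hn : 0 < n := by omega
  have hkR : (0:ℝ) < k := by exact_mod_cast hk1
  have hlow : ∀ y : Fin n → ℝ, Antitone y → ∀ i ∈ Finset.range k, y in1 ≤ Xext n hn y i := by
    intro y hy i _
    exact hy (by simp only [Fin.le_def, hin1]; omega)
  apply exposed_extreme_aux (fun y => y in1)
  · intro a b y z; simp
  · exact ones_mem hk1 hkn
  · intro y hy
    have h1 : (k:ℝ) * y in1 ≤ ∑ i ∈ Finset.range k, Xext n hn y i := by
      have := Finset.card_nsmul_le_sum (Finset.range k) (Xext n hn y) (y in1)
        (hlow y hy.1)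
      simpa [nsmul_eq_mul] using this
    have h2 := Gam_sum hk1 hkn hy
    have : (k:ℝ) * y in1 ≤ k := le_trans h1 h2
    nlinarith
  · intro y hy h
    have h1 : ∀ i ∈ Finset.range k, (1:ℝ) ≤ Xext n hn y i := by
      intro i hi
      have := hlow y hy.1 i hi
      rw [h] at this
      exact this
    have h2 := Gam_sum hk1 hkn hy
    have h3 : ∑ i ∈ Finset.range k, (Xext n hn y i - 1) = 0 := by
      have ha : ∑ i ∈ Finset.range k, (Xext n hn y i - 1)
          = (∑ i ∈ Finset.range k, Xext n hn y i) - k := by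
        rw [Finset.sum_sub_distrib, Finset.sum_const, Finset.card_range, nsmul_eq_mul, mul_one]
      have hb : 0 ≤ ∑ i ∈ Finset.range k, (Xext n hn y i - 1) :=
        Finset.sum_nonneg fun i hi => by linarith [h1 i hi]
      linarith
    have h4 : ∀ i ∈ Finset.range k, Xext n hn y i = 1 := by
      intro i hi
      have := (Finset.sum_eq_zero_iff_of_nonneg
        (fun i hi => by linarith [h1 i hi] : ∀ i ∈ Finset.range k, 0 ≤ Xext n hn y i - 1)).mp
        h3 i hi
      linarith
    funext i
    by_cases hik2 : (i:ℕ) < k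
    · have := h4 (i:ℕ) (Finset.mem_range.mpr hik2)
      rw [Xext_lt hn y i.isLt] at this
      simpa using this
    · have hval : y i = y ik := hy.2.1 i (by omega)
      have hkm : Xext n hn y (k-1) = y ik := by
        rw [Xext]
        have hmin : min (k-1) (n-1) = (ik : ℕ) := by omega
        congr 1
        exact Fin.ext hmin
      have := h4 (k-1) (Finset.mem_range.mpr (by omega))
      rw [hkm] at this
      rw [hval, this]

private lemma EE_extreme {n k : ℕ} {ik in1 : Fin n} (hk1 : 1 ≤ k) (hkn : k ≤ n)
    (hik : (ik : ℕ) = k - 1) (hin1 : (in1 : ℕ) = n - 1)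
    {j : ℕ} (hj1 : 1 ≤ j) (hjk : j ≤ k - 1) :
    EE n k j ∈ Set.extremePoints ℝ (Gam n k ik in1) := by
  have hn : 0 < n := by omega
  have hkR : (0:ℝ) < k := by exact_mod_cast hk1
  have hjR : (0:ℝ) < j := by exact_mod_cast hj1
  have hjn : j < n := by omega
  have hj1n : j - 1 < n := by omega
  have hEEval : EE n k j ⟨j-1, hj1n⟩ - EE n k j ⟨j, hjn⟩ = (k:ℝ)/j := by
    simp only [EE]
    rw [if_pos (by omega : j - 1 < j), if_neg (by omega : ¬ j < j)]
    ring
  have hub : ∀ y ∈ Gam n k ik in1, y ⟨j-1, hj1n⟩ ≤ (k:ℝ)/j := by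
    intro y hy
    have hc := Gam_coord (ik := ik) (in1 := in1) hk1 hkn hin1 hj1 (by omega : j ≤ k) hy
    rw [Xext_lt (by omega) y hj1n] at hc
    rw [le_div_iff₀ hjR]
    linarith
  apply exposed_extreme_aux (fun y => y ⟨j-1, hj1n⟩ - y ⟨j, hjn⟩)
  · intro a b y z; simp; ring
  · exact EE_mem hk1 hkn hik hin1 hj1 hjk
  · intro y hy
    rw [hEEval]
    have h0 : 0 ≤ y ⟨j, hjn⟩ := Gam_nonneg hin1 hy _
    linarith [hub y hy]
  · intro y hy h
    rw [hEEval] at h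
    have h0 : 0 ≤ y ⟨j, hjn⟩ := Gam_nonneg hin1 hy _
    have hyj : y ⟨j, hjn⟩ = 0 := by linarith [hub y hy]
    have hyj1 : y ⟨j-1, hj1n⟩ = (k:ℝ)/j := by linarith [hub y hy]
    have hzero : ∀ i : Fin n, j ≤ (i:ℕ) → y i = 0 := by
      intro i hi
      have hle : y i ≤ y ⟨j, hjn⟩ := hy.1 (by simp [Fin.le_def]; omega)
      have hge : 0 ≤ y i := Gam_nonneg hin1 hy i
      linarith [hyj]
    -- the sum over range j is at most k
    have hsplit : ∑ i ∈ Finset.range j, Xext n hn y i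
        + ∑ i ∈ Finset.Ico j k, Xext n hn y i = ∑ i ∈ Finset.range k, Xext n hn y i := by
      rw [Finset.range_eq_Ico]
      have := Finset.sum_Ico_consecutive (Xext n hn y) (by omega : 0 ≤ j) (by omega : j ≤ k)
      simpa using this
    have htail : ∑ i ∈ Finset.Ico j k, Xext n hn y i = 0 := by
      refine Finset.sum_eq_zero fun m hm => ?_
      simp only [Finset.mem_Ico] at hm
      rw [Xext]
      exact hzero _ (by simp; omega)
    have hsumj : ∑ i ∈ Finset.range j, Xext n hn y i ≤ k := by
      have := Gam_sum hk1 hkn hy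
      linarith [hsplit, htail]
    have hlowj : ∀ i ∈ Finset.range j, (k:ℝ)/j ≤ Xext n hn y i := by
      intro i hi
      simp only [Finset.mem_range] at hi
      have : Xext n hn y (j-1) ≤ Xext n hn y i := Xext_anti hn hy.1 (by omega)
      rw [Xext_lt hn y hj1n, hyj1] at this
      exact this
    have h3 : ∑ i ∈ Finset.range j, (Xext n hn y i - (k:ℝ)/j) = 0 := by
      have ha : ∑ i ∈ Finset.range j, (Xext n hn y i - (k:ℝ)/j)
          = (∑ i ∈ Finset.range j, Xext n hn y i) - j * ((k:ℝ)/j) := by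
        rw [Finset.sum_sub_distrib, Finset.sum_const, Finset.card_range, nsmul_eq_mul]
      have hjkj : (j:ℝ) * ((k:ℝ)/j) = k := by field_simp
      have hb : 0 ≤ ∑ i ∈ Finset.range j, (Xext n hn y i - (k:ℝ)/j) :=
        Finset.sum_nonneg fun i hi => by linarith [hlowj i hi]
      linarith
    have h4 : ∀ i ∈ Finset.range j, Xext n hn y i = (k:ℝ)/j := by
      intro i hi
      have := (Finset.sum_eq_zero_iff_of_nonneg
        (fun i hi => by linarith [hlowj i hi] :
          ∀ i ∈ Finset.range j, 0 ≤ Xext n hn y i - (k:ℝ)/j)).mp h3 i hi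
      linarith
    funext i
    by_cases hij : (i:ℕ) < j
    · have := h4 (i:ℕ) (Finset.mem_range.mpr hij)
      rw [Xext_lt hn y i.isLt] at this
      rw [this, EE, if_pos hij]
    · rw [hzero i (by omega), EE, if_neg hij]

/-- The extreme points of
`Γ = {x ∈ ℝⁿ : x₁ ≥ ⋯ ≥ x_k = ⋯ = xₙ ≥ 0, (x₁ + ⋯ + x_k)/k ≤ 1}`
are exactly the points whose first `j` coordinates are `k/j` and the rest `0`
(for `1 ≤ j ≤ k-1`), the all-ones vector, and the zero vector. -/
theorem stmt_16 (n k : ℕ) (hk1 : 1 ≤ k) (hkn : k ≤ n) :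
    Set.extremePoints ℝ
      {x : Fin n → ℝ | Antitone x ∧
        (∀ i : Fin n, k - 1 ≤ (i : ℕ) → x i = x ⟨k - 1, by omega⟩) ∧
        0 ≤ x ⟨n - 1, by omega⟩ ∧
        (∑ i ∈ Finset.univ.filter (fun i : Fin n => (i : ℕ) < k), x i) / k ≤ 1} =
      (⋃ j ∈ Set.Icc 1 (k - 1),
        {fun i : Fin n => if (i : ℕ) < j then (k : ℝ) / j else 0}) ∪
        {fun _ => 1} ∪ {0} := by
  have hn : 0 < n := by omega
  show Set.extremePoints ℝ (Gam n k ⟨k-1, by omega⟩ ⟨n-1, by omega⟩) =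
      (⋃ j ∈ Set.Icc 1 (k-1), {EE n k j}) ∪ {fun _ => (1:ℝ)} ∪ {0}
  have hik : ((⟨k-1, by omega⟩ : Fin n) : ℕ) = k - 1 := rfl
  have hin1 : ((⟨n-1, by omega⟩ : Fin n) : ℕ) = n - 1 := rfl
  apply Set.Subset.antisymm
  · have hhull : convexHull ℝ
        ((⋃ j ∈ Set.Icc 1 (k-1), {EE n k j}) ∪ {fun _ => (1:ℝ)} ∪ {0})
        = Gam n k ⟨k-1, by omega⟩ ⟨n-1, by omega⟩ := by
      apply le_antisymm
      · apply convexHull_min _ (Gam_convex hk1)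
        intro z hz
        rcases hz with (hz | hz) | hz
        · simp only [Set.mem_iUnion, Set.mem_singleton_iff] at hz
          obtain ⟨j, hj, rfl⟩ := hz
          rw [Set.mem_Icc] at hj
          exact EE_mem hk1 hkn hik hin1 hj.1 hj.2
        · rw [Set.mem_singleton_iff] at hz
          subst hz
          exact ones_mem hk1 hkn
        · rw [Set.mem_singleton_iff] at hz
          subst hz
          exact zero_mem hk1
      · exact Gam_subset_hull hk1 hkn hik hin1
    rw [← hhull]
    exact extremePoints_convexHull_subset
  · intro z hz
    rcases hz with (hz | hz) | hz
    · simp only [Set.mem_iUnion, Set.mem_singleton_iff] at hz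
      obtain ⟨j, hj, rfl⟩ := hz
      rw [Set.mem_Icc] at hj
      exact EE_extreme hk1 hkn hik hin1 hj.1 hj.2
    · rw [Set.mem_singleton_iff] at hz
      subst hz
      exact ones_extreme hk1 hkn hik hin1
    · rw [Set.mem_singleton_iff] at hz
      subst hz
      exact zero_extreme hk1 hkn hin1
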